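/- Let G be a topological group, K a compact subgroup of G, and let H₁ and H₂ be Hausdorff topological spaces equipped with continuous K-actions. Let K act continuously on G × Hᵢ by k·(g, h) = (g k⁻¹, k·h), and let G ×_K Hᵢ denote the quotient space of G × Hᵢ by this action, with the quotient topology; write [g, h] for the class of (g, h). If f : H₁ → H₂ is a continuous, K-equivariant (f(k·h) = k·f(h) for all k ∈ K, h ∈ H₁), proper map, then the induced map G ×_K H₁ → G ×_K H₂ given by [g, h] ↦ [g, f(h)] is a proper map. -/

import Mathlib

/-- The relation on `G × H` whose quotient is the twisted product `G ×_K H`: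
`(g, h) ∼ (g k⁻¹, k • h)` for `k ∈ K`, i.e. the orbit relation of the `K`-action
`k • (g, h) = (g k⁻¹, k • h)`. -/
def twistedRel (G : Type*) [Group G] (K : Subgroup G) (H : Type*) [MulAction K H] :
    (G × H) → (G × H) → Prop :=
  fun p q => ∃ k : K, q.1 = p.1 * (k : G)⁻¹ ∧ q.2 = k • p.2

/-- The twisted relation is an equivalence relation. -/
lemma twistedRel_equivalence (G : Type*) [Group G] (K : Subgroup G) (H : Type*)
    [MulAction K H] : Equivalence (twistedRel G K H) where
  refl p := ⟨1, by simp, by simp⟩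
  symm {p q} := by
    rintro ⟨k, h1, h2⟩
    exact ⟨k⁻¹, by simp [h1, mul_assoc], by simp [h2]⟩
  trans {p q r} := by
    rintro ⟨k, h1, h2⟩ ⟨l, h3, h4⟩
    refine ⟨l * k, ?_, ?_⟩
    · simp [h3, h1, mul_assoc]
    · simp [h4, h2, mul_smul]

/-- The quotient map onto the twisted product is proper when `K` is compact. -/
lemma twistedRel_quot_mk_proper
    {G : Type*} [Group G] [TopologicalSpace G] [IsTopologicalGroup G]
    (K : Subgroup G) (hK : IsCompact (K : Set G))
    {H : Type*} [TopologicalSpace H] [MulAction K H] [ContinuousSMul K H] :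
    IsProperMap (Quot.mk (twistedRel G K H)) := by
  haveI : CompactSpace K := isCompact_iff_compactSpace.mp hK
  -- the twisting action as an explicit map
  set φ : K × (G × H) → G × H := fun kp => (kp.2.1 * (kp.1 : G)⁻¹, kp.1 • kp.2.2) with hφ
  have hφcont : Continuous φ := by
    apply Continuous.prodMk
    · exact (continuous_snd.fst).mul ((continuous_subtype_val.comp continuous_fst).inv)
    · exact continuous_fst.smul continuous_snd.snd
  -- the "graph" homeomorphism (k, p) ↦ (k, φ (k, p))
  have hinv : ∀ kp : K × (G × H), φ (kp.1⁻¹, φ kp) = kp.2 := by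
    rintro ⟨k, g, h⟩
    simp [hφ, mul_assoc, smul_smul]
  let ψ : (K × (G × H)) ≃ₜ (K × (G × H)) :=
    { toFun := fun kp => (kp.1, φ kp)
      invFun := fun kp => (kp.1, φ (kp.1⁻¹, kp.2))
      left_inv := fun kp => by
        ext <;> simp [hinv kp]
      right_inv := fun kp => by
        have := hinv (kp.1⁻¹, kp.2)
        ext
        · rfl
        · simpa [hφ, mul_assoc, smul_smul] using congrArg Prod.fst this
        · simpa [hφ, mul_assoc, smul_smul] using congrArg Prod.snd this
      continuous_toFun := continuous_fst.prodMk hφcont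
      continuous_invFun := by
        refine continuous_fst.prodMk (hφcont.comp ?_)
        exact (continuous_fst.inv).prodMk continuous_snd }
  have hφclosed : IsClosedMap φ := by
    have : φ = Prod.snd ∘ ψ := rfl
    rw [this]
    exact isClosedMap_snd_of_compactSpace.comp ψ.isClosedMap
  -- equality in the quotient is exactly the relation
  have hrel : ∀ p q : G × H,
      Quot.mk (twistedRel G K H) p = Quot.mk (twistedRel G K H) q ↔ twistedRel G K H p q := by
    intro p q
    rw [Quot.eq]
    exact (twistedRel_equivalence G K H).eqvGen_iff
  rw [isProperMap_iff_isClosedMap_and_compact_fibers]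
  refine ⟨continuous_quot_mk, ?_, ?_⟩
  · -- closed map
    intro C hC
    rw [← isQuotientMap_quot_mk.isClosed_preimage]
    have : Quot.mk (twistedRel G K H) ⁻¹' (Quot.mk (twistedRel G K H) '' C)
        = φ '' (Set.univ ×ˢ C) := by
      ext x
      constructor
      · rintro ⟨c, hc, hqc⟩
        obtain ⟨k, h1, h2⟩ := (hrel c x).mp hqc
        exact ⟨(k, c), ⟨Set.mem_univ _, hc⟩, by simp [hφ, ← h1, ← h2]⟩
      · rintro ⟨⟨k, c⟩, ⟨-, hc⟩, hx⟩
        refine ⟨c, hc, (hrel c x).mpr ⟨k, ?_, ?_⟩⟩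
        · simp [← hx, hφ]
        · simp [← hx, hφ]
    rw [this]
    exact hφclosed _ (isClosed_univ.prod hC)
  · -- compact fibers
    intro y
    induction y using Quot.ind with
    | _ p =>
      have : Quot.mk (twistedRel G K H) ⁻¹' {Quot.mk (twistedRel G K H) p}
          = (fun k : K => φ (k, p)) '' Set.univ := by
        ext x
        simp only [Set.mem_preimage, Set.mem_singleton_iff, Set.image_univ, Set.mem_range]
        constructor
        · intro hx
          obtain ⟨k, h1, h2⟩ := (hrel p x).mp hx.symm
          exact ⟨k, by simp [hφ, ← h1, ← h2]⟩
        · rintro ⟨k, hk⟩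
          exact ((hrel p x).mpr ⟨k, by simp [← hk, hφ], by simp [← hk, hφ]⟩).symm
      rw [this]
      exact isCompact_univ.image (hφcont.comp (continuous_id.prodMk continuous_const))

/-- **Properness transfers to twisted products.**
Let `G` be a topological group, `K` a compact subgroup, and `H₁`, `H₂` Hausdorff spaces
with continuous `K`-actions.  Let `G ×_K Hᵢ` be the quotient of `G × Hᵢ` by the
`K`-action `k • (g, h) = (g k⁻¹, k • h)`, with the quotient topology.  If `f : H₁ → H₂`
is a continuous, `K`-equivariant, proper map, then the induced map
`G ×_K H₁ → G ×_K H₂`, `[g, h] ↦ [g, f h]`, is well defined and proper. -/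
theorem twistedProduct_map_proper
    {G : Type*} [Group G] [TopologicalSpace G] [IsTopologicalGroup G]
    (K : Subgroup G) (hK : IsCompact (K : Set G))
    {H₁ H₂ : Type*} [TopologicalSpace H₁] [TopologicalSpace H₂]
    [T2Space H₁] [T2Space H₂]
    [MulAction K H₁] [MulAction K H₂] [ContinuousSMul K H₁] [ContinuousSMul K H₂]
    (f : H₁ → H₂) (hf_cont : Continuous f)
    (hf_equiv : ∀ (k : K) (h : H₁), f (k • h) = k • f h)
    (hf_proper : IsProperMap f) :
    ∃ F : Quot (twistedRel G K H₁) → Quot (twistedRel G K H₂),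
      (∀ (g : G) (h : H₁),
        F (Quot.mk (twistedRel G K H₁) (g, h)) = Quot.mk (twistedRel G K H₂) (g, f h)) ∧
      IsProperMap F := by
  refine ⟨Quot.lift (fun p => Quot.mk (twistedRel G K H₂) (p.1, f p.2)) ?_, fun g h => rfl, ?_⟩
  · rintro p q ⟨k, h1, h2⟩
    exact Quot.sound ⟨k, h1, by simp [h2, hf_equiv]⟩
  · set F : Quot (twistedRel G K H₁) → Quot (twistedRel G K H₂) :=
      Quot.lift (fun p => Quot.mk (twistedRel G K H₂) (p.1, f p.2))
        (by rintro p q ⟨k, h1, h2⟩; exact Quot.sound ⟨k, h1, by simp [h2, hf_equiv]⟩) with hF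
    have hcomp : F ∘ Quot.mk (twistedRel G K H₁)
        = Quot.mk (twistedRel G K H₂) ∘ Prod.map id f := rfl
    have hGcomp : IsProperMap (F ∘ Quot.mk (twistedRel G K H₁)) := by
      rw [hcomp]
      exact (twistedRel_quot_mk_proper K hK).comp (isProperMap_id.prodMap hf_proper)
    have hFcont : Continuous F := by
      rw [isQuotientMap_quot_mk.continuous_iff]
      exact hGcomp.continuous
    exact isProperMap_of_comp_of_surj continuous_quot_mk hFcont hGcomp
      (Quot.mk_surjective)
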